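/- Let X₁ ~ DGLD(c, α₁, θ) and X₂ ~ DGLD(c, α₂, θ) with α₁ > α₂ > 0. Then for every x ∈ ℕ, P(X₁ ≤ x) ≤ P(X₂ ≤ x); i.e., the normalized incomplete gamma function P(α, t) = γ(α, t)/Γ(α) is nonincreasing in α for each fixed t > 0, hence DGLD is stochastically increasing in α. -/
import Mathlib


open MeasureTheory Real Filter Set

/-- Lower incomplete gamma function γ(a,t) = ∫₀ᵗ u^(a-1) e^(-u) du. -/
noncomputable def lowerGamma (a t : ℝ) : ℝ :=
  ∫ u in (0:ℝ)..t, u ^ (a - 1) * Real.exp (-u)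

/-- pmf of the discrete gamma-Lomax distribution DGLD(c,a,θ). -/
noncomputable def dgldPMF (c a θ : ℝ) (x : ℕ) : ℝ :=
  (1 / Real.Gamma a) *
    (lowerGamma a (c⁻¹ * Real.log (1 + ((x : ℝ) + 1) / θ)) -
     lowerGamma a (c⁻¹ * Real.log (1 + (x : ℝ) / θ)))

/-- cdf of DGLD(c,a,θ) at x ∈ ℕ. -/
noncomputable def dgldCDF (c a θ : ℝ) (x : ℕ) : ℝ :=
  lowerGamma a (c⁻¹ * Real.log (1 + ((x : ℝ) + 1) / θ)) / Real.Gamma a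

/-- density of the continuous gamma-Lomax distribution. -/
noncomputable def glPDF (c a θ : ℝ) (x : ℝ) : ℝ :=
  (1 / ((x + θ) * Real.Gamma a * c ^ a)) * (1 + x / θ) ^ (-(1 / c)) *
    (Real.log (1 + x / θ)) ^ (a - 1)

/-- cdf of the continuous gamma-Lomax distribution. -/
noncomputable def glCDF (c a θ : ℝ) (x : ℝ) : ℝ :=
  lowerGamma a (c⁻¹ * Real.log (1 + x / θ)) / Real.Gamma a

namespace DGLDaux

/-- The Gamma integrand. -/
noncomputable def g (a u : ℝ) : ℝ := Real.exp (-u) * u ^ (a - 1)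

lemma integrableOn_g {a : ℝ} (ha : 0 < a) {s : Set ℝ} (hs : s ⊆ Ioi 0) :
    IntegrableOn (g a) s := (Real.GammaIntegral_convergent ha).mono_set hs

lemma lowerGamma_eq {a t : ℝ} (ht : 0 ≤ t) :
    lowerGamma a t = ∫ u in Ioc 0 t, g a u := by
  rw [lowerGamma, intervalIntegral.integral_of_le ht]
  exact setIntegral_congr_fun measurableSet_Ioc fun u _ => mul_comm _ _

lemma gamma_split {a t : ℝ} (ha : 0 < a) (ht : 0 ≤ t) :
    Real.Gamma a = (∫ u in Ioc 0 t, g a u) + ∫ u in Ioi t, g a u := by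
  rw [Real.Gamma_eq_integral ha, ← Ioc_union_Ioi_eq_Ioi ht]
  exact setIntegral_union (Ioc_disjoint_Ioi le_rfl) measurableSet_Ioi
    (integrableOn_g ha Ioc_subset_Ioi_self) (integrableOn_g ha (Ioi_subset_Ioi ht))

lemma key {a₁ a₂ : ℝ} (ha : a₂ < a₁) (ha₂ : 0 < a₂) {t : ℝ} (ht : 0 ≤ t) :
    lowerGamma a₁ t * Real.Gamma a₂ ≤ lowerGamma a₂ t * Real.Gamma a₁ := by
  have ha₁ : 0 < a₁ := ha₂.trans ha
  have hG₁ : 0 < Real.Gamma a₁ := Real.Gamma_pos_of_pos ha₁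
  have hG₂ : 0 < Real.Gamma a₂ := Real.Gamma_pos_of_pos ha₂
  have hδ : 0 < a₁ - a₂ := by linarith
  set ts : ℝ := (Real.Gamma a₁ / Real.Gamma a₂) ^ (a₁ - a₂)⁻¹ with hts
  have hts_pos : 0 < ts := Real.rpow_pos_of_pos (div_pos hG₁ hG₂) _
  have hts_pow : ts ^ (a₁ - a₂) = Real.Gamma a₁ / Real.Gamma a₂ :=
    Real.rpow_inv_rpow (div_pos hG₁ hG₂).le hδ.ne'
  have hsplit : ∀ u : ℝ, 0 < u → u ^ (a₁ - 1) = u ^ (a₂ - 1) * u ^ (a₁ - a₂) := by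
    intro u hu
    rw [← Real.rpow_add hu]; ring_nf
  -- pointwise comparisons
  have hpt1 : ∀ u : ℝ, 0 < u → u ≤ ts →
      Real.Gamma a₂ * g a₁ u ≤ Real.Gamma a₁ * g a₂ u := by
    intro u hu hule
    have hpow : u ^ (a₁ - a₂) ≤ Real.Gamma a₁ / Real.Gamma a₂ := by
      rw [← hts_pow]; exact Real.rpow_le_rpow hu.le hule hδ.le
    have h1 : Real.Gamma a₂ * u ^ (a₁ - a₂) ≤ Real.Gamma a₁ := by
      rw [le_div_iff₀ hG₂] at hpow
      linarith [hpow]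
    have hnn : 0 ≤ Real.exp (-u) * u ^ (a₂ - 1) := by positivity
    calc Real.Gamma a₂ * g a₁ u
        = (Real.exp (-u) * u ^ (a₂ - 1)) * (Real.Gamma a₂ * u ^ (a₁ - a₂)) := by
          rw [g, hsplit u hu]; ring
      _ ≤ (Real.exp (-u) * u ^ (a₂ - 1)) * Real.Gamma a₁ := by
          exact mul_le_mul_of_nonneg_left h1 hnn
      _ = Real.Gamma a₁ * g a₂ u := by rw [g]; ring
  have hpt2 : ∀ u : ℝ, ts ≤ u →
      Real.Gamma a₁ * g a₂ u ≤ Real.Gamma a₂ * g a₁ u := by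
    intro u hule
    have hu : 0 < u := hts_pos.trans_le hule
    have hpow : Real.Gamma a₁ / Real.Gamma a₂ ≤ u ^ (a₁ - a₂) := by
      rw [← hts_pow]; exact Real.rpow_le_rpow hts_pos.le hule hδ.le
    have h1 : Real.Gamma a₁ ≤ Real.Gamma a₂ * u ^ (a₁ - a₂) := by
      rw [div_le_iff₀ hG₂] at hpow; linarith [hpow]
    have hnn : 0 ≤ Real.exp (-u) * u ^ (a₂ - 1) := by positivity
    calc Real.Gamma a₁ * g a₂ u
        = (Real.exp (-u) * u ^ (a₂ - 1)) * Real.Gamma a₁ := by rw [g]; ring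
      _ ≤ (Real.exp (-u) * u ^ (a₂ - 1)) * (Real.Gamma a₂ * u ^ (a₁ - a₂)) :=
          mul_le_mul_of_nonneg_left h1 hnn
      _ = Real.Gamma a₂ * g a₁ u := by rw [g, hsplit u hu]; ring
  rcases le_total t ts with hcase | hcase
  · -- compare on Ioc 0 t
    have h1 : (∫ u in Ioc 0 t, Real.Gamma a₂ * g a₁ u) ≤
        ∫ u in Ioc 0 t, Real.Gamma a₁ * g a₂ u :=
      setIntegral_mono_on
        ((integrableOn_g ha₁ Ioc_subset_Ioi_self).const_mul _)
        ((integrableOn_g ha₂ Ioc_subset_Ioi_self).const_mul _)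
        measurableSet_Ioc
        (fun u hu => hpt1 u hu.1 (hu.2.trans hcase))
    simp only [integral_const_mul] at h1
    rw [lowerGamma_eq ht, lowerGamma_eq ht]
    linarith
  · -- compare on Ioi t
    have h2 : (∫ u in Ioi t, Real.Gamma a₁ * g a₂ u) ≤
        ∫ u in Ioi t, Real.Gamma a₂ * g a₁ u :=
      setIntegral_mono_on
        ((integrableOn_g ha₂ (Ioi_subset_Ioi ht)).const_mul _)
        ((integrableOn_g ha₁ (Ioi_subset_Ioi ht)).const_mul _)
        measurableSet_Ioi
        (fun u hu => hpt2 u (hcase.trans (le_of_lt hu)))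
    simp only [integral_const_mul] at h2
    have e₁ : lowerGamma a₁ t = Real.Gamma a₁ - ∫ u in Ioi t, g a₁ u := by
      rw [lowerGamma_eq ht, gamma_split ha₁ ht]; ring
    have e₂ : lowerGamma a₂ t = Real.Gamma a₂ - ∫ u in Ioi t, g a₂ u := by
      rw [lowerGamma_eq ht, gamma_split ha₂ ht]; ring
    rw [e₁, e₂]
    nlinarith [h2]

end DGLDaux

theorem dgld_st_order_alpha (c a₁ a₂ θ : ℝ) (hc : 0 < c) (ha : a₁ > a₂)
    (ha₂ : 0 < a₂) (hθ : 0 < θ) :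
    ∀ x : ℕ, dgldCDF c a₁ θ x ≤ dgldCDF c a₂ θ x := by
  intro x
  have ha₁ : 0 < a₁ := ha₂.trans ha
  have hG₁ : 0 < Real.Gamma a₁ := Real.Gamma_pos_of_pos ha₁
  have hG₂ : 0 < Real.Gamma a₂ := Real.Gamma_pos_of_pos ha₂
  have hlog : 0 ≤ Real.log (1 + ((x : ℝ) + 1) / θ) := by
    apply Real.log_nonneg
    have : 0 ≤ ((x : ℝ) + 1) / θ := by positivity
    linarith
  have ht : 0 ≤ c⁻¹ * Real.log (1 + ((x : ℝ) + 1) / θ) := by positivity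
  rw [dgldCDF, dgldCDF, div_le_div_iff₀ hG₁ hG₂]
  exact DGLDaux.key ha ha₂ ht
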